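/- Assume in addition η > 0 and κ > 0. Then every eigenvalue λ of problem (P) satisfies Re(λ) < 0; in particular (P) has no purely imaginary eigenvalues. -/

import Mathlib

open MeasureTheory intervalIntegral in
private lemma eig_integral_pos_of_pos_at {f : ℝ → ℝ} (hf : Continuous f) (h0 : ∀ s, 0 ≤ f s)
    {s₀ : ℝ} (hs : s₀ ∈ Set.Icc (0:ℝ) 1) (hpos : 0 < f s₀) :
    0 < ∫ s in (0:ℝ)..1, f s := by
  rw [intervalIntegral.integral_pos_iff_support_of_nonneg_ae'
    (Filter.Eventually.of_forall fun x => h0 x) (hf.intervalIntegrable 0 1)]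
  refine ⟨one_pos, ?_⟩
  have hev : ∀ᶠ y in nhds s₀, f y ∈ Set.Ioi 0 :=
    hf.continuousAt.eventually_mem (isOpen_Ioi.mem_nhds hpos)
  obtain ⟨δ, hδ, hball⟩ := Metric.eventually_nhds_iff.mp hev
  set c := max (s₀ - δ/2) 0 with hc
  set d := min (s₀ + δ/2) 1 with hd
  have hcd : c < d := by
    apply max_lt_iff.mpr
    constructor <;> apply lt_min_iff.mpr <;> constructor <;>
      [linarith; linarith [hs.2]; linarith [hs.1]; norm_num]
  have hsub : Set.Ioo c d ⊆ Function.support f ∩ Set.Ioc 0 1 := by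
    intro x hx
    have h1 : dist x s₀ < δ := by
      rw [Real.dist_eq, abs_lt]
      constructor
      · have := hx.1; have : c ≥ s₀ - δ/2 := le_max_left _ _; linarith [hx.1]
      · have := hx.2; have h2 : d ≤ s₀ + δ/2 := min_le_left _ _; linarith
    refine ⟨(hball h1).ne', ?_, ?_⟩
    · have : (0:ℝ) ≤ c := le_max_right _ _; linarith [hx.1]
    · have : d ≤ 1 := min_le_right _ _; linarith [hx.2]
  calc (0:ENNReal) < volume (Set.Ioo c d) := by
        rw [Real.volume_Ioo]; simp [ENNReal.ofReal_pos]; linarith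
    _ ≤ _ := measure_mono hsub

open MeasureTheory intervalIntegral in
private lemma eig_eqzero_of_integral_zero {f : ℝ → ℝ} (hf : Continuous f) (h0 : ∀ s, 0 ≤ f s)
    (hi : (∫ s in (0:ℝ)..1, f s) = 0) : ∀ s ∈ Set.Icc (0:ℝ) 1, f s = 0 := by
  intro s hs
  by_contra hne
  have := eig_integral_pos_of_pos_at hf h0 hs (lt_of_le_of_ne (h0 s) (Ne.symm hne))
  linarith

private lemma eig_core_alg {a c : ℝ} {E l : ℂ} (ha : 0 < a) (hc : 0 ≤ c) (hE : 0 < E.re)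
    (hl : l ≠ 0) (heq : (a:ℂ) * l^2 + E * l + (c:ℂ) = 0) : l.re < 0 := by
  have hns : 0 < Complex.normSq l := Complex.normSq_pos.mpr hl
  have hE' : E = -(a:ℂ)*l - (c:ℂ)*l⁻¹ := by
    field_simp
    linear_combination heq
  have hre : E.re = -a * l.re - c * (l.re / Complex.normSq l) := by
    rw [hE']
    simp [Complex.sub_re, Complex.mul_re, Complex.inv_re, Complex.inv_im]
  by_contra hcon
  push_neg at hcon
  have h1 : 0 ≤ a * l.re := mul_nonneg ha.le hcon
  have h2 : 0 ≤ c * (l.re / Complex.normSq l) := mul_nonneg hc (div_nonneg hcon hns.le)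
  linarith

open Set in
private lemma eig_ode_unique (μ : ℝ) (b c : ℂ) {w : ℝ → ℂ} (hw4 : ContDiff ℝ 4 w)
    (hODE : ∀ s ∈ Icc (0:ℝ) 1, iteratedDeriv 4 w s
      = (μ:ℂ) * iteratedDeriv 2 w s - b * iteratedDeriv 1 w s - c * w s)
    (h0 : w 1 = 0) (h1 : iteratedDeriv 1 w 1 = 0) (h2 : iteratedDeriv 2 w 1 = 0)
    (h3 : iteratedDeriv 3 w 1 = 0) :
    ∀ s ∈ Icc (0:ℝ) 1, w s = 0 := by
  set V : ℝ → (Fin 4 → ℂ) → (Fin 4 → ℂ) :=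
    fun _ x => ![x 1, x 2, x 3, (μ:ℂ) * x 2 - b * x 1 - c * x 0] with hV
  set K : NNReal := ‖(μ:ℂ)‖₊ + ‖b‖₊ + ‖c‖₊ + 1 with hK
  have hK1 : (1:ℝ) ≤ (K:ℝ) := by
    simp [hK]
    positivity
  have hLip : ∀ t, LipschitzWith K (V t) := by
    intro t
    apply LipschitzWith.of_dist_le_mul
    intro x y
    have hd : ∀ i : Fin 4, dist (x i) (y i) ≤ dist x y := fun i => dist_le_pi_dist x y i
    rw [dist_pi_le_iff (by positivity)]
    intro i
    have hdnn : 0 ≤ dist x y := dist_nonneg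
    fin_cases i
    · calc dist (V t x 0) (V t y 0) = dist (x 1) (y 1) := by simp [hV]
        _ ≤ dist x y := hd 1
        _ ≤ K * dist x y := le_mul_of_one_le_left hdnn hK1
    · calc dist (V t x 1) (V t y 1) = dist (x 2) (y 2) := by simp [hV]
        _ ≤ dist x y := hd 2
        _ ≤ K * dist x y := le_mul_of_one_le_left hdnn hK1
    · calc dist (V t x 2) (V t y 2) = dist (x 3) (y 3) := by simp [hV]
        _ ≤ dist x y := hd 3
        _ ≤ K * dist x y := le_mul_of_one_le_left hdnn hK1
    · have heq3 : V t x 3 - V t y 3 = (μ:ℂ) * (x 2 - y 2) - b * (x 1 - y 1) - c * (x 0 - y 0) := by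
        simp [hV]; ring
      show dist (V t x 3) (V t y 3) ≤ K * dist x y
      rw [dist_eq_norm, heq3]
      have e2 : ‖x 2 - y 2‖ ≤ dist x y := by rw [← dist_eq_norm]; exact hd 2
      have e1 : ‖x 1 - y 1‖ ≤ dist x y := by rw [← dist_eq_norm]; exact hd 1
      have e0 : ‖x 0 - y 0‖ ≤ dist x y := by rw [← dist_eq_norm]; exact hd 0
      calc ‖(μ:ℂ) * (x 2 - y 2) - b * (x 1 - y 1) - c * (x 0 - y 0)‖
          ≤ ‖(μ:ℂ) * (x 2 - y 2) - b * (x 1 - y 1)‖ + ‖c * (x 0 - y 0)‖ := norm_sub_le _ _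
        _ ≤ ‖(μ:ℂ) * (x 2 - y 2)‖ + ‖b * (x 1 - y 1)‖ + ‖c * (x 0 - y 0)‖ := by
            have := norm_sub_le ((μ:ℂ) * (x 2 - y 2)) (b * (x 1 - y 1)); linarith
        _ = ‖(μ:ℂ)‖ * ‖x 2 - y 2‖ + ‖b‖ * ‖x 1 - y 1‖ + ‖c‖ * ‖x 0 - y 0‖ := by
            simp [norm_mul]
        _ ≤ ‖(μ:ℂ)‖ * dist x y + ‖b‖ * dist x y + ‖c‖ * dist x y := by
            gcongr <;> positivity
        _ ≤ K * dist x y := by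
            have : (K:ℝ) = ‖(μ:ℂ)‖ + ‖b‖ + ‖c‖ + 1 := by simp [hK]
            nlinarith
  have hW : ∀ n, n < 4 → ∀ x : ℝ, HasDerivAt (iteratedDeriv n w) (iteratedDeriv (n+1) w x) x := by
    intro n hn x
    have hd : DifferentiableAt ℝ (iteratedDeriv n w) x :=
      (hw4.differentiable_iteratedDeriv n (by exact_mod_cast hn)).differentiableAt
    have := hd.hasDerivAt
    rwa [show iteratedDeriv (n+1) w x = deriv (iteratedDeriv n w) x by rw [iteratedDeriv_succ]]
  set f : ℝ → Fin 4 → ℂ := fun t i => iteratedDeriv i.val w t with hf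
  have hfc : ContinuousOn f (Icc 0 1) :=
    (continuous_pi fun (i : Fin 4) => hw4.continuous_iteratedDeriv i.val
      (by exact_mod_cast (le_of_lt i.isLt))).continuousOn
  have hfd : ∀ t ∈ Ioc (0:ℝ) 1, HasDerivWithinAt f (V t (f t)) (Iic t) t := by
    intro t ht
    have h4 : HasDerivAt f (fun i : Fin 4 => iteratedDeriv (i.val+1) w t) t :=
      hasDerivAt_pi.2 (fun i => hW i.val i.isLt t)
    have heq : (fun i : Fin 4 => iteratedDeriv (i.val+1) w t) = V t (f t) := by
      funext i
      fin_cases i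
      · rfl
      · rfl
      · rfl
      · show iteratedDeriv 4 w t = V t (f t) 3
        have hv3 : V t (f t) 3
            = (μ:ℂ) * iteratedDeriv 2 w t - b * iteratedDeriv 1 w t - c * w t := by
          simp [hV, hf]
        rw [hv3]
        exact hODE t ⟨ht.1.le, ht.2⟩
    exact (heq ▸ h4).hasDerivWithinAt
  have hgd : ∀ t ∈ Ioc (0:ℝ) 1, HasDerivWithinAt (fun _ : ℝ => (0 : Fin 4 → ℂ))
      (V t 0) (Iic t) t := by
    intro t ht
    have hz : V t 0 = 0 := by
      funext i; fin_cases i <;> simp [hV]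
    rw [hz]
    exact (hasDerivAt_const t _).hasDerivWithinAt
  have h1eq : f 1 = (fun _ : ℝ => (0 : Fin 4 → ℂ)) 1 := by
    funext i
    fin_cases i
    · simpa [hf] using h0
    · simpa [hf] using h1
    · simpa [hf] using h2
    · simpa [hf] using h3
  have hEq := ODE_solution_unique_of_mem_Icc_left (v := V) (s := fun _ => univ)
    (fun t _ => (hLip t).lipschitzOnWith) hfc hfd (fun t _ => mem_univ _)
    (continuousOn_const) hgd (fun t _ => mem_univ _) h1eq
  intro s hs
  have hfs := hEq hs
  have h00 : f s 0 = 0 := by rw [hfs]; rfl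
  simpa [hf] using h00

section EigHelp2
open Set Complex MeasureTheory intervalIntegral
variable {w : ℝ → ℂ}

private lemma eig_hW_aux (hw4 : ContDiff ℝ 4 w) (n : ℕ) (hn : n < 4) (x : ℝ) :
    HasDerivAt (iteratedDeriv n w) (iteratedDeriv (n+1) w x) x := by
  have hd : DifferentiableAt ℝ (iteratedDeriv n w) x :=
    (hw4.differentiable_iteratedDeriv n (by exact_mod_cast hn)).differentiableAt
  have := hd.hasDerivAt
  rwa [show iteratedDeriv (n+1) w x = deriv (iteratedDeriv n w) x by rw [iteratedDeriv_succ]]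

private lemma eig_hWc_aux (hw4 : ContDiff ℝ 4 w) (n : ℕ) (hn : n ≤ 4) :
    Continuous (iteratedDeriv n w) :=
  hw4.continuous_iteratedDeriv n (by exact_mod_cast hn)

private lemma eig_ibp_aux (hw4 : ContDiff ℝ 4 w) (m n : ℕ) (hm : m < 4) (hn : n < 4) :
    (∫ s in (0:ℝ)..1, (starRingEnd ℂ) (iteratedDeriv m w s) * iteratedDeriv (n+1) w s)
      = (starRingEnd ℂ) (iteratedDeriv m w 1) * iteratedDeriv n w 1
        - (starRingEnd ℂ) (iteratedDeriv m w 0) * iteratedDeriv n w 0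
        - ∫ s in (0:ℝ)..1, (starRingEnd ℂ) (iteratedDeriv (m+1) w s) * iteratedDeriv n w s := by
  refine intervalIntegral.integral_mul_deriv_eq_deriv_mul
    (u := fun s => (starRingEnd ℂ) (iteratedDeriv m w s))
    (v := iteratedDeriv n w)
    (u' := fun s => (starRingEnd ℂ) (iteratedDeriv (m+1) w s))
    (v' := iteratedDeriv (n+1) w) ?_ ?_ ?_ ?_
  · intro x _
    exact (eig_hW_aux hw4 m hm x).star
  · intro x _
    exact eig_hW_aux hw4 n hn x
  · exact ((continuous_conj.comp (eig_hWc_aux hw4 (m+1) (by omega))).intervalIntegrable 0 1)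
  · exact ((eig_hWc_aux hw4 (n+1) (by omega)).intervalIntegrable 0 1)

private lemma eig_Jdiag_aux (g : ℝ → ℂ) :
    (∫ s in (0:ℝ)..1, (starRingEnd ℂ) (g s) * g s)
      = ((∫ s in (0:ℝ)..1, Complex.normSq (g s) : ℝ) : ℂ) := by
  rw [← intervalIntegral.integral_ofReal]
  refine intervalIntegral.integral_congr fun s _ => ?_
  rw [← Complex.normSq_eq_conj_mul_self]

private lemma eig_conj_intervalIntegral (f : ℝ → ℂ) (a b : ℝ) :
    (∫ x in a..b, (starRingEnd ℂ) (f x)) = (starRingEnd ℂ) (∫ x in a..b, f x) := by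
  simp [intervalIntegral, ← integral_conj]

end EigHelp2



open Set Complex

/-- An eigenpair of problem (P): `w` is a nonzero `C⁴` function on `[0,1]`
satisfying the ODE `w'''' − (γ−η²)w'' + 2λβη w' + λ²w = 0` together with the
boundary conditions `w(0) = w''(0) = 0`, `w''(1) + λκ w'(1) = 0`,
`w'''(1) − (γ−η²) w'(1) = 0`. -/
def IsEigenpairP (β η γ κ : ℝ) (l : ℂ) (w : ℝ → ℂ) : Prop :=
  ContDiff ℝ 4 w ∧ (∃ s ∈ Icc (0:ℝ) 1, w s ≠ 0) ∧
  (∀ s ∈ Icc (0:ℝ) 1,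
    iteratedDeriv 4 w s - ((γ - η^2 : ℝ) : ℂ) * iteratedDeriv 2 w s
      + 2 * l * ((β * η : ℝ) : ℂ) * deriv w s + l^2 * w s = 0) ∧
  w 0 = 0 ∧ iteratedDeriv 2 w 0 = 0 ∧
  iteratedDeriv 2 w 1 + l * ((κ : ℝ) : ℂ) * deriv w 1 = 0 ∧
  iteratedDeriv 3 w 1 - ((γ - η^2 : ℝ) : ℂ) * deriv w 1 = 0

/-- An eigenvalue of problem (P). -/
def IsEigenvalueP (β η γ κ : ℝ) (l : ℂ) : Prop :=
  ∃ w : ℝ → ℂ, IsEigenpairP β η γ κ l w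

/-- if `η > 0` and `κ > 0`, every eigenvalue of problem (P) lies
in the open left half-plane; in particular (P) has no purely imaginary
eigenvalues. -/
theorem eigenvalue_re_neg (β η γ κ : ℝ) (hβ : β ∈ Ioo (0:ℝ) 1) (hη : 0 < η)
    (hκ : 0 < κ) (hγ : η^2 < γ) (l : ℂ)
    (h : IsEigenvalueP β η γ κ l) : l.re < 0 := by
  obtain ⟨w, hw4, ⟨s₀, hs₀, hne⟩, hODE, hb0, hb20, hbc1, hbc3⟩ := h
  set μ : ℝ := γ - η^2 with hμdef
  have hμ : 0 < μ := by rw [hμdef]; linarith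
  have hβη : 0 < β * η := mul_pos hβ.1 hη
  have hd1 : deriv w = iteratedDeriv 1 w := (iteratedDeriv_one).symm
  rw [hd1] at hODE hbc1 hbc3
  have hODE' : ∀ s ∈ Icc (0:ℝ) 1, iteratedDeriv 4 w s
      = (μ:ℂ) * iteratedDeriv 2 w s - (2 * l * ((β * η : ℝ):ℂ)) * iteratedDeriv 1 w s
        - l^2 * w s := by
    intro s hs
    linear_combination hODE s hs
  have hb0' : iteratedDeriv 0 w 0 = 0 := by rw [iteratedDeriv_zero]; exact hb0
  have hbc1' : iteratedDeriv 2 w 1 = -(l * (κ:ℂ)) * iteratedDeriv 1 w 1 := by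
    linear_combination hbc1
  have hbc3' : iteratedDeriv 3 w 1 = (μ:ℂ) * iteratedDeriv 1 w 1 := by
    linear_combination hbc3
  have hint : ∀ m n : ℕ, m ≤ 4 → n ≤ 4 → IntervalIntegrable
      (fun s => (starRingEnd ℂ) (iteratedDeriv m w s) * iteratedDeriv n w s)
      MeasureTheory.volume 0 1 := fun m n hm hn =>
    ((continuous_conj.comp (eig_hWc_aux hw4 m hm)).mul
      (eig_hWc_aux hw4 n hn)).intervalIntegrable 0 1
  set a' : ℝ := ∫ s in (0:ℝ)..1, Complex.normSq (iteratedDeriv 0 w s) with ha'def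
  set c1 : ℝ := ∫ s in (0:ℝ)..1, Complex.normSq (iteratedDeriv 1 w s) with hc1def
  set c2 : ℝ := ∫ s in (0:ℝ)..1, Complex.normSq (iteratedDeriv 2 w s) with hc2def
  have hJ00 : (∫ s in (0:ℝ)..1, (starRingEnd ℂ) (iteratedDeriv 0 w s) * iteratedDeriv 0 w s)
      = (a' : ℂ) := eig_Jdiag_aux _
  have hJ11 : (∫ s in (0:ℝ)..1, (starRingEnd ℂ) (iteratedDeriv 1 w s) * iteratedDeriv 1 w s)
      = (c1 : ℂ) := eig_Jdiag_aux _
  have hJ22 : (∫ s in (0:ℝ)..1, (starRingEnd ℂ) (iteratedDeriv 2 w s) * iteratedDeriv 2 w s)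
      = (c2 : ℂ) := eig_Jdiag_aux _
  have ha'nn : 0 ≤ a' := intervalIntegral.integral_nonneg (by norm_num)
    (fun s _ => Complex.normSq_nonneg _)
  have hc1nn : 0 ≤ c1 := intervalIntegral.integral_nonneg (by norm_num)
    (fun s _ => Complex.normSq_nonneg _)
  have hc2nn : 0 ≤ c2 := intervalIntegral.integral_nonneg (by norm_num)
    (fun s _ => Complex.normSq_nonneg _)
  have hsplit : (∫ s in (0:ℝ)..1, (starRingEnd ℂ) (iteratedDeriv 0 w s) * iteratedDeriv 4 w s)
      = (μ:ℂ) * (∫ s in (0:ℝ)..1, (starRingEnd ℂ) (iteratedDeriv 0 w s) * iteratedDeriv 2 w s)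
        - (2 * l * ((β * η : ℝ):ℂ))
            * (∫ s in (0:ℝ)..1, (starRingEnd ℂ) (iteratedDeriv 0 w s) * iteratedDeriv 1 w s)
        - l^2 * (∫ s in (0:ℝ)..1, (starRingEnd ℂ) (iteratedDeriv 0 w s) * iteratedDeriv 0 w s)
      := by
    have hcong : (∫ s in (0:ℝ)..1, (starRingEnd ℂ) (iteratedDeriv 0 w s) * iteratedDeriv 4 w s)
        = ∫ s in (0:ℝ)..1,
            ((μ:ℂ) * ((starRingEnd ℂ) (iteratedDeriv 0 w s) * iteratedDeriv 2 w s)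
            - (2 * l * ((β * η : ℝ):ℂ))
                * ((starRingEnd ℂ) (iteratedDeriv 0 w s) * iteratedDeriv 1 w s)
            - l^2 * ((starRingEnd ℂ) (iteratedDeriv 0 w s) * iteratedDeriv 0 w s)) := by
      refine intervalIntegral.integral_congr fun s hs => ?_
      rw [uIcc_of_le (by norm_num : (0:ℝ) ≤ 1)] at hs
      have hode := hODE' s hs
      rw [show iteratedDeriv 0 w = w from iteratedDeriv_zero]
      linear_combination (starRingEnd ℂ) (w s) * hode
    rw [hcong, intervalIntegral.integral_sub, intervalIntegral.integral_sub,
      intervalIntegral.integral_const_mul, intervalIntegral.integral_const_mul,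
      intervalIntegral.integral_const_mul]
    · exact (hint 0 2 (by norm_num) (by norm_num)).const_mul _
    · exact (hint 0 1 (by norm_num) (by norm_num)).const_mul _
    · exact ((hint 0 2 (by norm_num) (by norm_num)).const_mul _).sub
        ((hint 0 1 (by norm_num) (by norm_num)).const_mul _)
    · exact (hint 0 0 (by norm_num) (by norm_num)).const_mul _
  have e1 := eig_ibp_aux hw4 0 3 (by norm_num) (by norm_num)
  have e2 := eig_ibp_aux hw4 1 2 (by norm_num) (by norm_num)
  have e3 := eig_ibp_aux hw4 0 1 (by norm_num) (by norm_num)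
  have e4 := eig_ibp_aux hw4 0 0 (by norm_num) (by norm_num)
  simp only [hb0', hbc1', hbc3', hb20, map_zero, zero_mul, mul_zero, sub_zero] at e1 e2 e3 e4
  norm_num only at e1 e2 e3 e4
  have hb1sq : (starRingEnd ℂ) (iteratedDeriv 1 w 1) * iteratedDeriv 1 w 1
      = ((Complex.normSq (iteratedDeriv 1 w 1) : ℝ):ℂ) :=
    (Complex.normSq_eq_conj_mul_self).symm
  have hb0sq : (starRingEnd ℂ) (iteratedDeriv 0 w 1) * iteratedDeriv 0 w 1
      = ((Complex.normSq (iteratedDeriv 0 w 1) : ℝ):ℂ) :=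
    (Complex.normSq_eq_conj_mul_self).symm
  have key : (a':ℂ) * l^2
      + (2 * ((β * η : ℝ):ℂ)
          * (∫ s in (0:ℝ)..1, (starRingEnd ℂ) (iteratedDeriv 0 w s) * iteratedDeriv 1 w s)
        + (κ:ℂ) * ((Complex.normSq (iteratedDeriv 1 w 1) : ℝ):ℂ)) * l
      + ((c2 : ℝ):ℂ) + (μ:ℂ) * ((c1:ℝ):ℂ) = 0 := by
    linear_combination hsplit - e1 + e2 + (μ:ℂ)*e3 - l^2*hJ00 - l*(κ:ℂ)*hb1sq - hJ22 - (μ:ℂ)*hJ11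
  -- real part of the first-order coefficient
  have hconjI : (∫ s in (0:ℝ)..1, (starRingEnd ℂ) (iteratedDeriv 1 w s) * iteratedDeriv 0 w s)
      = (starRingEnd ℂ)
          (∫ s in (0:ℝ)..1, (starRingEnd ℂ) (iteratedDeriv 0 w s) * iteratedDeriv 1 w s) := by
    rw [← eig_conj_intervalIntegral]
    refine intervalIntegral.integral_congr fun s _ => ?_
    simp [mul_comm]
  rw [hconjI, hb0sq] at e4
  have hReB : 2 * (∫ s in (0:ℝ)..1,
        (starRingEnd ℂ) (iteratedDeriv 0 w s) * iteratedDeriv 1 w s).re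
      = Complex.normSq (iteratedDeriv 0 w 1) := by
    have hsum : (∫ s in (0:ℝ)..1, (starRingEnd ℂ) (iteratedDeriv 0 w s) * iteratedDeriv 1 w s)
        + (starRingEnd ℂ)
            (∫ s in (0:ℝ)..1, (starRingEnd ℂ) (iteratedDeriv 0 w s) * iteratedDeriv 1 w s)
        = ((Complex.normSq (iteratedDeriv 0 w 1) : ℝ):ℂ) := by
      linear_combination e4
    rw [Complex.add_conj] at hsum
    exact_mod_cast hsum
  by_cases hz : iteratedDeriv 0 w 1 = 0 ∧ iteratedDeriv 1 w 1 = 0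
  · exfalso
    apply hne
    have hw1 : w 1 = 0 := by
      have := hz.1; rwa [show iteratedDeriv 0 w = w from iteratedDeriv_zero] at this
    have h21 : iteratedDeriv 2 w 1 = 0 := by rw [hbc1', hz.2, mul_zero]
    have h31 : iteratedDeriv 3 w 1 = 0 := by rw [hbc3', hz.2, mul_zero]
    exact eig_ode_unique μ (2 * l * ((β * η : ℝ):ℂ)) (l^2) hw4 hODE' hw1 hz.2 h21 h31 s₀ hs₀
  · -- at least one boundary quantity is nonzero
    have hEre : 0 < (2 * ((β * η : ℝ):ℂ)
          * (∫ s in (0:ℝ)..1, (starRingEnd ℂ) (iteratedDeriv 0 w s) * iteratedDeriv 1 w s)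
        + (κ:ℂ) * ((Complex.normSq (iteratedDeriv 1 w 1) : ℝ):ℂ)).re := by
      have hre : (2 * ((β * η : ℝ):ℂ)
          * (∫ s in (0:ℝ)..1, (starRingEnd ℂ) (iteratedDeriv 0 w s) * iteratedDeriv 1 w s)
        + (κ:ℂ) * ((Complex.normSq (iteratedDeriv 1 w 1) : ℝ):ℂ)).re
          = (β * η) * Complex.normSq (iteratedDeriv 0 w 1)
            + κ * Complex.normSq (iteratedDeriv 1 w 1) := by
        have hReB' := hReB
        simp only [iteratedDeriv_zero, iteratedDeriv_one] at hReB'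
        simp [Complex.add_re, Complex.mul_re, Complex.mul_im, Complex.ofReal_re,
          Complex.ofReal_im]
        nlinarith [hReB']
      rw [hre]
      rcases not_and_or.mp hz with hb|hb
      · have h1 : 0 < Complex.normSq (iteratedDeriv 0 w 1) := Complex.normSq_pos.mpr hb
        have h2 : 0 ≤ Complex.normSq (iteratedDeriv 1 w 1) := Complex.normSq_nonneg _
        nlinarith
      · have h1 : 0 ≤ Complex.normSq (iteratedDeriv 0 w 1) := Complex.normSq_nonneg _
        have h2 : 0 < Complex.normSq (iteratedDeriv 1 w 1) := Complex.normSq_pos.mpr hb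
        nlinarith
    by_cases hl0 : l = 0
    · exfalso
      have hc0 : c2 + μ * c1 = 0 := by
        have hk := key
        rw [hl0] at hk
        simp at hk
        exact_mod_cast hk
      have hc10 : c1 = 0 := by nlinarith
      have hzero : ∀ s ∈ Icc (0:ℝ) 1, iteratedDeriv 1 w s = 0 := by
        intro s hs
        have := eig_eqzero_of_integral_zero
          (f := fun s => Complex.normSq (iteratedDeriv 1 w s))
          (Complex.continuous_normSq.comp (eig_hWc_aux hw4 1 (by norm_num)))
          (fun s => Complex.normSq_nonneg _) (by rw [← hc1def]; exact hc10) s hs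
        exact Complex.normSq_eq_zero.mp this
      apply hne
      have hftc : (∫ t in (0:ℝ)..s₀, iteratedDeriv 1 w t) = w s₀ - w 0 := by
        apply intervalIntegral.integral_eq_sub_of_hasDerivAt
        · intro x _
          have := eig_hW_aux hw4 0 (by norm_num) x
          rwa [show iteratedDeriv 0 w = w from iteratedDeriv_zero] at this
        · exact (eig_hWc_aux hw4 1 (by norm_num)).intervalIntegrable 0 s₀
      have hz0 : (∫ t in (0:ℝ)..s₀, iteratedDeriv 1 w t) = 0 := by
        have heq0 : EqOn (fun t => iteratedDeriv 1 w t) (fun _ => (0:ℂ)) (uIcc 0 s₀) := by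
          intro t ht
          rw [uIcc_of_le hs₀.1] at ht
          exact hzero t ⟨ht.1, le_trans ht.2 hs₀.2⟩
        rw [intervalIntegral.integral_congr heq0, intervalIntegral.integral_zero]
      rw [hz0, hb0] at hftc
      linear_combination -hftc
    · have ha'pos : 0 < a' := by
        rw [ha'def]
        apply eig_integral_pos_of_pos_at (f := fun s => Complex.normSq (iteratedDeriv 0 w s))
        · exact Complex.continuous_normSq.comp (eig_hWc_aux hw4 0 (by norm_num))
        · exact fun s => Complex.normSq_nonneg _
        · exact hs₀
        · show 0 < Complex.normSq (iteratedDeriv 0 w s₀)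
          rw [show iteratedDeriv 0 w = w from iteratedDeriv_zero]
          exact Complex.normSq_pos.mpr hne
      have key' : (a':ℂ) * l^2
          + (2 * ((β * η : ℝ):ℂ)
              * (∫ s in (0:ℝ)..1, (starRingEnd ℂ) (iteratedDeriv 0 w s) * iteratedDeriv 1 w s)
            + (κ:ℂ) * ((Complex.normSq (iteratedDeriv 1 w 1) : ℝ):ℂ)) * l
          + ((c2 + μ * c1 : ℝ):ℂ) = 0 := by
        push_cast at key ⊢
        linear_combination key
      exact eig_core_alg ha'pos (by nlinarith) hEre hl0 key'
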